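/- Define f(α,β,γ) = (1 + γ(α−β))² − α(2γβ − 1). Let α, β ∈ [0,1) and 0 < γ ≤ γ' < 1. If f(α,β,γ) < 0, then α < β, the partial derivative of f with respect to γ is strictly negative at every γ'' ∈ (0,1) (given α < β), and f(α,β,γ') < 0. -/

import Mathlib

/-- If `f(α,β,γ) = (1+γ(α-β))² - α(2γβ-1) < 0` for some `γ ∈ (0,1)`,
then `α < β`, the derivative of `f` in `γ` is strictly negative on `(0,1)` (given
`α < β`), and `f(α,β,γ') < 0` for every `γ' ∈ [γ, 1)`; i.e. the set `𝒢(γ)` is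
monotonically increasing in `γ`. -/
theorem stmt12 (α β γ γ' : ℝ)
    (hα : α ∈ Set.Ico (0 : ℝ) 1) (hβ : β ∈ Set.Ico (0 : ℝ) 1)
    (hγ : 0 < γ) (hγγ' : γ ≤ γ') (hγ' : γ' < 1)
    (hf : (1 + γ * (α - β)) ^ 2 - α * (2 * γ * β - 1) < 0) :
    α < β ∧
    (α < β → ∀ γ'' ∈ Set.Ioo (0 : ℝ) 1,
      deriv (fun g : ℝ => (1 + g * (α - β)) ^ 2 - α * (2 * g * β - 1)) γ'' < 0) ∧
    (1 + γ' * (α - β)) ^ 2 - α * (2 * γ' * β - 1) < 0 := by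
  obtain ⟨hα0, hα1⟩ := hα
  obtain ⟨hβ0, hβ1⟩ := hβ
  have hγ1 : γ < 1 := lt_of_le_of_lt hγγ' hγ'
  have hαβ : α < β := by
    by_contra h
    push_neg at h
    have hgb : γ * β < 1 := by nlinarith
    nlinarith [sq_nonneg (γ * (α - β)), mul_nonneg hγ.le (sub_nonneg.2 h),
      mul_pos (sub_pos.2 hα1) (sub_pos.2 hgb), mul_nonneg hα0 (sub_pos.2 hgb).le]
  refine ⟨hαβ, ?_, ?_⟩
  · intro _ γ'' hγ''
    obtain ⟨h0, h1⟩ := hγ''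
    have hder : deriv (fun g : ℝ => (1 + g * (α - β)) ^ 2 - α * (2 * g * β - 1)) γ''
        = 2 * (1 + γ'' * (α - β)) * (α - β) - α * (2 * β) := by
      have : HasDerivAt (fun g : ℝ => (1 + g * (α - β)) ^ 2 - α * (2 * g * β - 1))
          (2 * (1 + γ'' * (α - β)) * (α - β) - α * (2 * β)) γ'' := by
        have h1 : HasDerivAt (fun g : ℝ => 1 + g * (α - β)) (α - β) γ'' := by
          simpa using ((hasDerivAt_id γ'').mul_const (α - β)).const_add 1
        have h2 := (h1.fun_pow 2)
        have h3 : HasDerivAt (fun g : ℝ => α * (2 * g * β - 1)) (α * (2 * β)) γ'' := by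
          have : HasDerivAt (fun g : ℝ => 2 * g * β - 1) (2 * β) γ'' := by
            simpa [mul_assoc, mul_comm] using
              (((hasDerivAt_id γ'').const_mul 2).mul_const β).sub_const 1
          simpa using this.const_mul α
        simpa [pow_one, mul_comm, mul_assoc] using h2.fun_sub h3
      exact this.deriv
    rw [hder]
    have hpos : 1 + γ'' * (α - β) > 0 := by nlinarith
    nlinarith [mul_pos hpos (sub_pos.2 hαβ)]
  · have hs : (0:ℝ) ≤ γ' - γ := sub_nonneg.2 hγγ'
    have hd : (0:ℝ) < β - α := sub_pos.2 hαβ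
    have hd1 : β - α ≤ 1 := by linarith
    nlinarith [mul_nonneg (mul_nonneg hs hd.le) (by linarith : (0:ℝ) ≤ 2 - γ - γ'),
      mul_nonneg (mul_nonneg (mul_nonneg hs hd.le) (by linarith : (0:ℝ) ≤ γ + γ'))
        (by linarith : (0:ℝ) ≤ 1 - (β - α)),
      mul_nonneg (mul_nonneg hs hα0) hβ0]
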